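/- The complex vector space of homogeneous polynomials of degree 4 in ℂ[x0,x1,x2,x3] invariant under all six matrices (A1,1), (1,A1), (A2,1), (1,A2), (R4A2,R4A2), (S,S) (i.e. invariant under the group (OO)') has dimension 2, and it is spanned by q² = (x0²+x1²+x2²+x3²)² and f0 = x0⁴+x1⁴+x2⁴+x3⁴. -/

import Mathlib

open Matrix MvPolynomial

noncomputable def A1l : Matrix (Fin 4) (Fin 4) ℝ :=
  !![0, -1, 0, 0; 1, 0, 0, 0; 0, 0, 0, -1; 0, 0, 1, 0]

noncomputable def A1r : Matrix (Fin 4) (Fin 4) ℝ :=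
  !![0, 1, 0, 0; -1, 0, 0, 0; 0, 0, 0, -1; 0, 0, 1, 0]

noncomputable def A2l : Matrix (Fin 4) (Fin 4) ℝ :=
  !![0, 0, -1, 0; 0, 0, 0, 1; 1, 0, 0, 0; 0, -1, 0, 0]

noncomputable def A2r : Matrix (Fin 4) (Fin 4) ℝ :=
  !![0, 0, 1, 0; 0, 0, 0, 1; -1, 0, 0, 0; 0, -1, 0, 0]

noncomputable def Sl : Matrix (Fin 4) (Fin 4) ℝ :=
  (1 / 2 : ℝ) • !![1, -1, 1, -1; 1, 1, -1, -1; -1, 1, 1, -1; 1, 1, 1, 1]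

noncomputable def Sr : Matrix (Fin 4) (Fin 4) ℝ :=
  (1 / 2 : ℝ) • !![1, 1, -1, 1; -1, 1, -1, -1; 1, 1, 1, -1; -1, 1, 1, 1]

noncomputable def SS : Matrix (Fin 4) (Fin 4) ℝ := Sl * Sr

noncomputable def R4A2 : Matrix (Fin 4) (Fin 4) ℝ :=
  !![1, 0, 0, 0; 0, -1, 0, 0; 0, 0, 0, 1; 0, 0, 1, 0]

/-- The substitution action of a real 4×4 matrix on `ℂ[x₀,x₁,x₂,x₃]`: `f(x) ↦ f(M·x)`. -/
noncomputable def subst (M : Matrix (Fin 4) (Fin 4) ℝ) :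
    MvPolynomial (Fin 4) ℂ →ₐ[ℂ] MvPolynomial (Fin 4) ℂ :=
  MvPolynomial.aeval (fun i => ∑ j, MvPolynomial.C ((M i j : ℝ) : ℂ) * MvPolynomial.X j)

/-- Degree-4 homogeneous polynomials invariant under the group (OO)'. -/
noncomputable def OOprimeInv4 : Submodule ℂ (MvPolynomial (Fin 4) ℂ) :=
  homogeneousSubmodule (Fin 4) ℂ 4 ⊓
    ⨅ M ∈ ({A1l, A1r, A2l, A2r, R4A2, SS} : Set (Matrix (Fin 4) (Fin 4) ℝ)),
      LinearMap.eqLocus (subst M).toLinearMap LinearMap.id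

noncomputable def q : MvPolynomial (Fin 4) ℂ := X 0 ^ 2 + X 1 ^ 2 + X 2 ^ 2 + X 3 ^ 2
noncomputable def f0 : MvPolynomial (Fin 4) ℂ := X 0 ^ 4 + X 1 ^ 4 + X 2 ^ 4 + X 3 ^ 4

noncomputable def Fd (a b c e : ℕ) : Fin 4 →₀ ℕ :=
  Finsupp.single 0 a + Finsupp.single 1 b + Finsupp.single 2 c + Finsupp.single 3 e

lemma Fd_apply0 (a b c e : ℕ) : Fd a b c e 0 = a := by simp [Fd, Finsupp.single_apply]
lemma Fd_apply1 (a b c e : ℕ) : Fd a b c e 1 = b := by simp [Fd, Finsupp.single_apply]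
lemma Fd_apply2 (a b c e : ℕ) : Fd a b c e 2 = c := by simp [Fd, Finsupp.single_apply]
lemma Fd_apply3 (a b c e : ℕ) : Fd a b c e 3 = e := by simp [Fd, Finsupp.single_apply]

lemma Fd_eta (d : Fin 4 →₀ ℕ) : Fd (d 0) (d 1) (d 2) (d 3) = d := by
  ext i; fin_cases i <;> simp [Fd, Finsupp.single_apply]

lemma X_pow_mono (a b c e : ℕ) :
    (X 0 : MvPolynomial (Fin 4) ℂ) ^ a * X 1 ^ b * X 2 ^ c * X 3 ^ e = monomial (Fd a b c e) 1 := by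
  simp [Fd, X_pow_eq_monomial, monomial_mul]

lemma Fd_eq_iff (a b c e a' b' c' e' : ℕ) :
    Fd a b c e = Fd a' b' c' e' ↔ (a = a' ∧ b = b' ∧ c = c' ∧ e = e') := by
  constructor
  · intro h
    refine ⟨?_, ?_, ?_, ?_⟩
    · have := congrFun (congrArg (↑· : (Fin 4 →₀ ℕ) → Fin 4 → ℕ) h) 0
      simpa [Fd_apply0] using this
    · have := congrFun (congrArg (↑· : (Fin 4 →₀ ℕ) → Fin 4 → ℕ) h) 1
      simpa [Fd_apply1] using this
    · have := congrFun (congrArg (↑· : (Fin 4 →₀ ℕ) → Fin 4 → ℕ) h) 2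
      simpa [Fd_apply2] using this
    · have := congrFun (congrArg (↑· : (Fin 4 →₀ ℕ) → Fin 4 → ℕ) h) 3
      simpa [Fd_apply3] using this
  · rintro ⟨rfl, rfl, rfl, rfl⟩; rfl

lemma aeval_scale_monomial (c : Fin 4 → ℂ) (u : Fin 4 →₀ ℕ) (a : ℂ) :
    aeval (fun i => C (c i) * X i) (monomial u a)
      = C (∏ i ∈ u.support, c i ^ u i) * monomial u a := by
  rw [aeval_monomial, monomial_eq]
  have hexp : (fun (i : Fin 4) (k : ℕ) => (C (c i) * X i : MvPolynomial (Fin 4) ℂ) ^ k)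
      = fun i k => C (c i ^ k) * X i ^ k := by
    funext i k; rw [mul_pow, C_pow]
  rw [hexp, Finsupp.prod, Finset.prod_mul_distrib, ← map_prod C (fun i => c i ^ u i) u.support]
  simp [Finsupp.prod, algebraMap_eq]
  ring

lemma coeff_scale (c : Fin 4 → ℂ) (f : MvPolynomial (Fin 4) ℂ) (d : Fin 4 →₀ ℕ) :
    coeff d (aeval (fun i => C (c i) * X i) f) = (∏ i, c i ^ d i) * coeff d f := by
  induction f using MvPolynomial.induction_on' with
  | add p q hp hq => simp only [map_add, coeff_add, mul_add, hp, hq]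
  | monomial u a =>
      rw [aeval_scale_monomial, coeff_C_mul, coeff_monomial]
      by_cases h : u = d
      · subst h
        simp only [if_pos rfl]
        congr 1
        refine Finset.prod_subset (Finset.subset_univ _) ?_
        intro i _ hi
        rw [Finsupp.notMem_support_iff.mp hi, pow_zero]
      · simp [if_neg h]

lemma coeff_rename_perm (σ : Equiv.Perm (Fin 4)) (g : MvPolynomial (Fin 4) ℂ) (d : Fin 4 →₀ ℕ) :
    coeff d (rename (σ : Fin 4 → Fin 4) g) = coeff (Finsupp.equivMapDomain σ.symm d) g := by
  have h1 : d = Finsupp.mapDomain (σ : Fin 4 → Fin 4) (Finsupp.equivMapDomain σ.symm d) := by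
    rw [← Finsupp.equivMapDomain_eq_mapDomain]
    ext i; simp
  conv_lhs => rw [h1]
  exact coeff_rename_mapDomain _ σ.injective g _

lemma aeval_perm_eq (σ : Equiv.Perm (Fin 4)) (c : Fin 4 → ℂ) (f : MvPolynomial (Fin 4) ℂ) :
    aeval (fun i => C (c i) * X (σ i)) f
      = rename (σ : Fin 4 → Fin 4) (aeval (fun i => C (c i) * X i) f) := by
  have : (MvPolynomial.rename (σ : Fin 4 → Fin 4)).comp
      (MvPolynomial.aeval (R := ℂ) (fun i => C (c i) * X i))
      = aeval (fun i => C (c i) * X (σ i)) := by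
    apply MvPolynomial.algHom_ext
    intro i
    simp
  rw [← this]; rfl

lemma coeff_rel (σ : Equiv.Perm (Fin 4)) (c : Fin 4 → ℂ) (f : MvPolynomial (Fin 4) ℂ)
    (h : aeval (fun i => C (c i) * X (σ i)) f = f) (d : Fin 4 →₀ ℕ) :
    coeff d f = (∏ i, c i ^ d (σ i)) * coeff (Finsupp.equivMapDomain σ.symm d) f := by
  conv_lhs => rw [← h, aeval_perm_eq, coeff_rename_perm, coeff_scale]
  congr 1

def sA1l : Equiv.Perm (Fin 4) := Equiv.swap 0 1 * Equiv.swap 2 3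
def sA2l : Equiv.Perm (Fin 4) := Equiv.swap 0 2 * Equiv.swap 1 3
def sR : Equiv.Perm (Fin 4) := Equiv.swap 2 3
def sSS : Equiv.Perm (Fin 4) := Equiv.swap 1 2 * Equiv.swap 2 3

noncomputable def cA1l : Fin 4 → ℂ := ![-1, 1, -1, 1]
noncomputable def cA1r : Fin 4 → ℂ := ![1, -1, -1, 1]
noncomputable def cA2l : Fin 4 → ℂ := ![-1, 1, 1, -1]
noncomputable def cA2r : Fin 4 → ℂ := ![1, 1, -1, -1]
noncomputable def cR : Fin 4 → ℂ := ![1, -1, 1, 1]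
noncomputable def cSS : Fin 4 → ℂ := ![1, -1, -1, 1]
noncomputable def cD1 : Fin 4 → ℂ := ![1, 1, -1, -1]
noncomputable def cD2 : Fin 4 → ℂ := ![1, -1, 1, -1]

lemma subst_A1l_eq (f : MvPolynomial (Fin 4) ℂ) :
    subst A1l f = aeval (fun i => C (cA1l i) * X (sA1l i)) f := by
  have h : (fun i => ∑ j, MvPolynomial.C ((A1l i j : ℝ) : ℂ) * MvPolynomial.X j)
      = fun i => C (cA1l i) * X (sA1l i) := by
    funext i
    fin_cases i <;>
      · simp [A1l, cA1l, Fin.sum_univ_four, sA1l, Equiv.swap_apply_def]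

  rw [subst, h]

lemma subst_A1r_eq (f : MvPolynomial (Fin 4) ℂ) :
    subst A1r f = aeval (fun i => C (cA1r i) * X (sA1l i)) f := by
  have h : (fun i => ∑ j, MvPolynomial.C ((A1r i j : ℝ) : ℂ) * MvPolynomial.X j)
      = fun i => C (cA1r i) * X (sA1l i) := by
    funext i
    fin_cases i <;>
      · simp [A1r, cA1r, Fin.sum_univ_four, sA1l, Equiv.swap_apply_def]

  rw [subst, h]

lemma subst_A2l_eq (f : MvPolynomial (Fin 4) ℂ) :
    subst A2l f = aeval (fun i => C (cA2l i) * X (sA2l i)) f := by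
  have h : (fun i => ∑ j, MvPolynomial.C ((A2l i j : ℝ) : ℂ) * MvPolynomial.X j)
      = fun i => C (cA2l i) * X (sA2l i) := by
    funext i
    fin_cases i <;>
      · simp [A2l, cA2l, Fin.sum_univ_four, sA2l, Equiv.swap_apply_def]

  rw [subst, h]

lemma subst_A2r_eq (f : MvPolynomial (Fin 4) ℂ) :
    subst A2r f = aeval (fun i => C (cA2r i) * X (sA2l i)) f := by
  have h : (fun i => ∑ j, MvPolynomial.C ((A2r i j : ℝ) : ℂ) * MvPolynomial.X j)
      = fun i => C (cA2r i) * X (sA2l i) := by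
    funext i
    fin_cases i <;>
      · simp [A2r, cA2r, Fin.sum_univ_four, sA2l, Equiv.swap_apply_def]

  rw [subst, h]

lemma subst_R_eq (f : MvPolynomial (Fin 4) ℂ) :
    subst R4A2 f = aeval (fun i => C (cR i) * X (sR i)) f := by
  have h : (fun i => ∑ j, MvPolynomial.C ((R4A2 i j : ℝ) : ℂ) * MvPolynomial.X j)
      = fun i => C (cR i) * X (sR i) := by
    funext i
    fin_cases i <;>
      · simp [R4A2, cR, Fin.sum_univ_four, sR, Equiv.swap_apply_def]

  rw [subst, h]

lemma subst_SS_eq (f : MvPolynomial (Fin 4) ℂ) :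
    subst SS f = aeval (fun i => C (cSS i) * X (sSS i)) f := by
  have h : (fun i => ∑ j, MvPolynomial.C ((SS i j : ℝ) : ℂ) * MvPolynomial.X j)
      = fun i => C (cSS i) * X (sSS i) := by
    funext i
    fin_cases i <;>
      · simp [SS, cSS, Fin.sum_univ_four, sSS, Equiv.swap_apply_def, Sl, Sr, Matrix.mul_apply]
        simp only [← C_mul, ← C_add, ← C_neg]; norm_num
  rw [subst, h]

lemma subst_D1_eq (f : MvPolynomial (Fin 4) ℂ) :
    subst A1r (subst A1l f) = aeval (fun i => C (cD1 i) * X i) f := by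
  have h : (subst A1r).comp (subst A1l) = aeval (fun i => C (cD1 i) * X i) := by
    apply MvPolynomial.algHom_ext
    intro i
    fin_cases i <;>
      · simp [subst, A1l, A1r, cD1, Fin.sum_univ_four, Matrix.vecHead, Matrix.vecTail]
        try norm_num
  calc subst A1r (subst A1l f) = ((subst A1r).comp (subst A1l)) f := rfl
    _ = _ := by rw [h]

lemma subst_D2_eq (f : MvPolynomial (Fin 4) ℂ) :
    subst A2r (subst A2l f) = aeval (fun i => C (cD2 i) * X i) f := by
  have h : (subst A2r).comp (subst A2l) = aeval (fun i => C (cD2 i) * X i) := by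
    apply MvPolynomial.algHom_ext
    intro i
    fin_cases i <;>
      · simp [subst, A2l, A2r, cD2, Fin.sum_univ_four, Matrix.vecHead, Matrix.vecTail]
        try norm_num
  calc subst A2r (subst A2l f) = ((subst A2r).comp (subst A2l)) f := rfl
    _ = _ := by rw [h]

lemma relA1l {g : MvPolynomial (Fin 4) ℂ}
    (hg : aeval (fun i => C (cA1l i) * X (sA1l i)) g = g) (a b c e : ℕ) :
    coeff (Fd a b c e) g = (-1 : ℂ) ^ (b+e) * coeff (Fd b a e c) g := by
  have h := coeff_rel sA1l cA1l g hg (Fd a b c e)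
  have e0 : sA1l 0 = 1 := by decide
  have e1 : sA1l 1 = 0 := by decide
  have e2 : sA1l 2 = 3 := by decide
  have e3 : sA1l 3 = 2 := by decide
  have h2 : Finsupp.equivMapDomain sA1l.symm (Fd a b c e) = Fd b a e c := by
    ext i
    fin_cases i
    · show (Fd a b c e) (sA1l 0) = (Fd b a e c) 0
      rw [e0]; simp only [Fd_apply0, Fd_apply1, Fd_apply2, Fd_apply3]
    · show (Fd a b c e) (sA1l 1) = (Fd b a e c) 1
      rw [e1]; simp only [Fd_apply0, Fd_apply1, Fd_apply2, Fd_apply3]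
    · show (Fd a b c e) (sA1l 2) = (Fd b a e c) 2
      rw [e2]; simp only [Fd_apply0, Fd_apply1, Fd_apply2, Fd_apply3]
    · show (Fd a b c e) (sA1l 3) = (Fd b a e c) 3
      rw [e3]; simp only [Fd_apply0, Fd_apply1, Fd_apply2, Fd_apply3]
  rw [h, h2, Fin.prod_univ_four, e0, e1, e2, e3, Fd_apply0, Fd_apply1, Fd_apply2, Fd_apply3]
  simp only [cA1l, Matrix.cons_val_zero, Matrix.cons_val_one, Matrix.head_cons,
    Matrix.cons_val_two, Matrix.tail_cons, Matrix.cons_val_three]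
  rw [pow_add]; ring

lemma relR {g : MvPolynomial (Fin 4) ℂ}
    (hg : aeval (fun i => C (cR i) * X (sR i)) g = g) (a b c e : ℕ) :
    coeff (Fd a b c e) g = (-1 : ℂ) ^ (b) * coeff (Fd a b e c) g := by
  have h := coeff_rel sR cR g hg (Fd a b c e)
  have e0 : sR 0 = 0 := by decide
  have e1 : sR 1 = 1 := by decide
  have e2 : sR 2 = 3 := by decide
  have e3 : sR 3 = 2 := by decide
  have h2 : Finsupp.equivMapDomain sR.symm (Fd a b c e) = Fd a b e c := by
    ext i
    fin_cases i
    · show (Fd a b c e) (sR 0) = (Fd a b e c) 0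
      rw [e0]; simp only [Fd_apply0, Fd_apply1, Fd_apply2, Fd_apply3]
    · show (Fd a b c e) (sR 1) = (Fd a b e c) 1
      rw [e1]; simp only [Fd_apply0, Fd_apply1, Fd_apply2, Fd_apply3]
    · show (Fd a b c e) (sR 2) = (Fd a b e c) 2
      rw [e2]; simp only [Fd_apply0, Fd_apply1, Fd_apply2, Fd_apply3]
    · show (Fd a b c e) (sR 3) = (Fd a b e c) 3
      rw [e3]; simp only [Fd_apply0, Fd_apply1, Fd_apply2, Fd_apply3]
  rw [h, h2, Fin.prod_univ_four, e0, e1, e2, e3, Fd_apply0, Fd_apply1, Fd_apply2, Fd_apply3]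
  simp only [cR, Matrix.cons_val_zero, Matrix.cons_val_one, Matrix.head_cons,
    Matrix.cons_val_two, Matrix.tail_cons, Matrix.cons_val_three]
  ring

lemma relSS {g : MvPolynomial (Fin 4) ℂ}
    (hg : aeval (fun i => C (cSS i) * X (sSS i)) g = g) (a b c e : ℕ) :
    coeff (Fd a b c e) g = (-1 : ℂ) ^ (c+e) * coeff (Fd a c e b) g := by
  have h := coeff_rel sSS cSS g hg (Fd a b c e)
  have e0 : sSS 0 = 0 := by decide
  have e1 : sSS 1 = 2 := by decide
  have e2 : sSS 2 = 3 := by decide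
  have e3 : sSS 3 = 1 := by decide
  have h2 : Finsupp.equivMapDomain sSS.symm (Fd a b c e) = Fd a c e b := by
    ext i
    fin_cases i
    · show (Fd a b c e) (sSS 0) = (Fd a c e b) 0
      rw [e0]; simp only [Fd_apply0, Fd_apply1, Fd_apply2, Fd_apply3]
    · show (Fd a b c e) (sSS 1) = (Fd a c e b) 1
      rw [e1]; simp only [Fd_apply0, Fd_apply1, Fd_apply2, Fd_apply3]
    · show (Fd a b c e) (sSS 2) = (Fd a c e b) 2
      rw [e2]; simp only [Fd_apply0, Fd_apply1, Fd_apply2, Fd_apply3]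
    · show (Fd a b c e) (sSS 3) = (Fd a c e b) 3
      rw [e3]; simp only [Fd_apply0, Fd_apply1, Fd_apply2, Fd_apply3]
  rw [h, h2, Fin.prod_univ_four, e0, e1, e2, e3, Fd_apply0, Fd_apply1, Fd_apply2, Fd_apply3]
  simp only [cSS, Matrix.cons_val_zero, Matrix.cons_val_one, Matrix.head_cons,
    Matrix.cons_val_two, Matrix.tail_cons, Matrix.cons_val_three]
  rw [pow_add]; ring

lemma relD1 {g : MvPolynomial (Fin 4) ℂ}
    (hg : aeval (fun i => C (cD1 i) * X i) g = g) (a b c e : ℕ) :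
    coeff (Fd a b c e) g = (-1 : ℂ) ^ (c + e) * coeff (Fd a b c e) g := by
  conv_lhs => rw [← hg, coeff_scale]
  rw [Fin.prod_univ_four, Fd_apply0, Fd_apply1, Fd_apply2, Fd_apply3]
  simp only [cD1, Matrix.cons_val_zero, Matrix.cons_val_one, Matrix.head_cons,
    Matrix.cons_val_two, Matrix.tail_cons, Matrix.cons_val_three]
  rw [pow_add]; ring

lemma relD2 {g : MvPolynomial (Fin 4) ℂ}
    (hg : aeval (fun i => C (cD2 i) * X i) g = g) (a b c e : ℕ) :
    coeff (Fd a b c e) g = (-1 : ℂ) ^ (b + e) * coeff (Fd a b c e) g := by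
  conv_lhs => rw [← hg, coeff_scale]
  rw [Fin.prod_univ_four, Fd_apply0, Fd_apply1, Fd_apply2, Fd_apply3]
  simp only [cD2, Matrix.cons_val_zero, Matrix.cons_val_one, Matrix.head_cons,
    Matrix.cons_val_two, Matrix.tail_cons, Matrix.cons_val_three]
  rw [pow_add]; ring

lemma q_inv (σ : Equiv.Perm (Fin 4)) (c : Fin 4 → ℂ) (hc : ∀ i, c i = 1 ∨ c i = -1) :
    aeval (fun i => C (c i) * X (σ i)) q = q := by
  have hq : q = ∑ i : Fin 4, X i ^ 2 := by rw [Fin.sum_univ_four, q]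
  rw [hq, map_sum, ← Equiv.sum_comp σ (fun j => (X j : MvPolynomial (Fin 4) ℂ) ^ 2)]
  apply Finset.sum_congr rfl
  intro i _
  rw [map_pow, aeval_X]
  rcases hc i with h | h <;> rw [h] <;> simp [mul_pow] <;> try ring

lemma f0_inv (σ : Equiv.Perm (Fin 4)) (c : Fin 4 → ℂ) (hc : ∀ i, c i = 1 ∨ c i = -1) :
    aeval (fun i => C (c i) * X (σ i)) f0 = f0 := by
  have hf : f0 = ∑ i : Fin 4, X i ^ 4 := by rw [Fin.sum_univ_four, f0]
  rw [hf, map_sum, ← Equiv.sum_comp σ (fun j => (X j : MvPolynomial (Fin 4) ℂ) ^ 4)]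
  apply Finset.sum_congr rfl
  intro i _
  rw [map_pow, aeval_X]
  rcases hc i with h | h <;> rw [h] <;> simp [mul_pow] <;> try ring

set_option maxHeartbeats 1000000 in
lemma hq2_expand : q ^ 2 = monomial (Fd 4 0 0 0) 1 + monomial (Fd 0 4 0 0) 1
    + monomial (Fd 0 0 4 0) 1 + monomial (Fd 0 0 0 4) 1
    + (monomial (Fd 2 2 0 0) 1 + monomial (Fd 2 2 0 0) 1)
    + (monomial (Fd 2 0 2 0) 1 + monomial (Fd 2 0 2 0) 1)
    + (monomial (Fd 2 0 0 2) 1 + monomial (Fd 2 0 0 2) 1)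
    + (monomial (Fd 0 2 2 0) 1 + monomial (Fd 0 2 2 0) 1)
    + (monomial (Fd 0 2 0 2) 1 + monomial (Fd 0 2 0 2) 1)
    + (monomial (Fd 0 0 2 2) 1 + monomial (Fd 0 0 2 2) 1) := by
  simp only [← X_pow_mono]
  rw [q]; ring

lemma hf0_expand : f0 = monomial (Fd 4 0 0 0) 1 + monomial (Fd 0 4 0 0) 1
    + monomial (Fd 0 0 4 0) 1 + monomial (Fd 0 0 0 4) 1 := by
  simp only [← X_pow_mono]
  rw [f0]; ring

lemma coeff_q2_4000 : coeff (Fd 4 0 0 0) (q ^ 2) = 1 := by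
  rw [hq2_expand]; simp [coeff_monomial, Fd_eq_iff]

lemma coeff_q2_2200 : coeff (Fd 2 2 0 0) (q ^ 2) = 2 := by
  rw [hq2_expand]; simp [coeff_monomial, Fd_eq_iff]; norm_num

lemma coeff_f0_4000 : coeff (Fd 4 0 0 0) f0 = 1 := by
  rw [hf0_expand]; simp [coeff_monomial, Fd_eq_iff]

lemma coeff_f0_2200 : coeff (Fd 2 2 0 0) f0 = 0 := by
  rw [hf0_expand]; simp [coeff_monomial, Fd_eq_iff]

lemma q2_hom : (q ^ 2) ∈ homogeneousSubmodule (Fin 4) ℂ 4 := by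
  rw [mem_homogeneousSubmodule]
  have hq : q.IsHomogeneous 2 := by
    rw [q]
    exact (((isHomogeneous_X_pow 0 2).add (isHomogeneous_X_pow 1 2)).add
      (isHomogeneous_X_pow 2 2)).add (isHomogeneous_X_pow 3 2)
  simpa using hq.pow 2

lemma f0_hom : f0 ∈ homogeneousSubmodule (Fin 4) ℂ 4 := by
  rw [mem_homogeneousSubmodule, f0]
  exact (((isHomogeneous_X_pow 0 4).add (isHomogeneous_X_pow 1 4)).add
    (isHomogeneous_X_pow 2 4)).add (isHomogeneous_X_pow 3 4)

set_option maxHeartbeats 1000000 in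
lemma kzero (K : ℕ → ℕ → ℕ → ℕ → ℂ)
    (RA1l : ∀ a b c e, K a b c e = (-1 : ℂ) ^ (b + e) * K b a e c)
    (RR : ∀ a b c e, K a b c e = (-1 : ℂ) ^ b * K a b e c)
    (RSS : ∀ a b c e, K a b c e = (-1 : ℂ) ^ (c + e) * K a c e b)
    (RD1 : ∀ a b c e, K a b c e = (-1 : ℂ) ^ (c + e) * K a b c e)
    (RD2 : ∀ a b c e, K a b c e = (-1 : ℂ) ^ (b + e) * K a b c e)
    (h4 : K 4 0 0 0 = 0) (h22 : K 2 2 0 0 = 0)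
    (a b c e : ℕ) (hsum : a + b + c + e = 4) : K a b c e = 0 := by
  by_cases hbe : (b + e) % 2 = 1
  · have h := RD2 a b c e
    rw [Odd.neg_one_pow (Nat.odd_iff.mpr hbe)] at h
    linear_combination h / 2
  by_cases hce : (c + e) % 2 = 1
  · have h := RD1 a b c e
    rw [Odd.neg_one_pow (Nat.odd_iff.mpr hce)] at h
    linear_combination h / 2
  have k0400 : K 0 4 0 0 = 0 := by rw [RA1l 0 4 0 0]; norm_num [h4]
  have k0040 : K 0 0 4 0 = 0 := by rw [RSS 0 0 4 0]; norm_num [k0400]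
  have k0004 : K 0 0 0 4 = 0 := by rw [RSS 0 0 0 4]; norm_num [k0040]
  have k2020 : K 2 0 2 0 = 0 := by rw [RSS 2 0 2 0]; norm_num [h22]
  have k2002 : K 2 0 0 2 = 0 := by rw [RSS 2 0 0 2]; norm_num [k2020]
  have k0220 : K 0 2 2 0 = 0 := by rw [RA1l 0 2 2 0]; norm_num [k2002]
  have k0202 : K 0 2 0 2 = 0 := by rw [RA1l 0 2 0 2]; norm_num [k2020]
  have k0022 : K 0 0 2 2 = 0 := by rw [RSS 0 0 2 2]; norm_num [k0220]
  have k1111 : K 1 1 1 1 = 0 := by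
    have h := RR 1 1 1 1
    norm_num at h
    linear_combination h / 2
  have ha : a ≤ 4 := by omega
  have hb : b ≤ 4 := by omega
  have hc : c ≤ 4 := by omega
  have he : e ≤ 4 := by omega
  interval_cases a <;> interval_cases b <;> interval_cases c <;> interval_cases e <;>
    first | assumption | omega

lemma hc_A1l : ∀ i, cA1l i = 1 ∨ cA1l i = -1 := by intro i; fin_cases i <;> simp [cA1l]
lemma hc_A1r : ∀ i, cA1r i = 1 ∨ cA1r i = -1 := by intro i; fin_cases i <;> simp [cA1r]
lemma hc_A2l : ∀ i, cA2l i = 1 ∨ cA2l i = -1 := by intro i; fin_cases i <;> simp [cA2l]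
lemma hc_A2r : ∀ i, cA2r i = 1 ∨ cA2r i = -1 := by intro i; fin_cases i <;> simp [cA2r]
lemma hc_R : ∀ i, cR i = 1 ∨ cR i = -1 := by intro i; fin_cases i <;> simp [cR]
lemma hc_SS : ∀ i, cSS i = 1 ∨ cSS i = -1 := by intro i; fin_cases i <;> simp [cSS]

lemma subst_q_inv (M : Matrix (Fin 4) (Fin 4) ℝ)
    (hM : M ∈ ({A1l, A1r, A2l, A2r, R4A2, SS} : Set (Matrix (Fin 4) (Fin 4) ℝ))) :
    subst M q = q := by
  simp only [Set.mem_insert_iff, Set.mem_singleton_iff] at hM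
  rcases hM with rfl | rfl | rfl | rfl | rfl | rfl
  · rw [subst_A1l_eq]; exact q_inv _ _ hc_A1l
  · rw [subst_A1r_eq]; exact q_inv _ _ hc_A1r
  · rw [subst_A2l_eq]; exact q_inv _ _ hc_A2l
  · rw [subst_A2r_eq]; exact q_inv _ _ hc_A2r
  · rw [subst_R_eq]; exact q_inv _ _ hc_R
  · rw [subst_SS_eq]; exact q_inv _ _ hc_SS

lemma subst_f0_inv (M : Matrix (Fin 4) (Fin 4) ℝ)
    (hM : M ∈ ({A1l, A1r, A2l, A2r, R4A2, SS} : Set (Matrix (Fin 4) (Fin 4) ℝ))) :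
    subst M f0 = f0 := by
  simp only [Set.mem_insert_iff, Set.mem_singleton_iff] at hM
  rcases hM with rfl | rfl | rfl | rfl | rfl | rfl
  · rw [subst_A1l_eq]; exact f0_inv _ _ hc_A1l
  · rw [subst_A1r_eq]; exact f0_inv _ _ hc_A1r
  · rw [subst_A2l_eq]; exact f0_inv _ _ hc_A2l
  · rw [subst_A2r_eq]; exact f0_inv _ _ hc_A2r
  · rw [subst_R_eq]; exact f0_inv _ _ hc_R
  · rw [subst_SS_eq]; exact f0_inv _ _ hc_SS

lemma q2_mem : q ^ 2 ∈ OOprimeInv4 := by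
  rw [OOprimeInv4, Submodule.mem_inf]
  refine ⟨q2_hom, ?_⟩
  rw [Submodule.mem_iInf]
  intro M
  rw [Submodule.mem_iInf]
  intro hM
  rw [LinearMap.mem_eqLocus]
  show subst M (q ^ 2) = q ^ 2
  rw [map_pow, subst_q_inv M hM]

lemma f0_mem : f0 ∈ OOprimeInv4 := by
  rw [OOprimeInv4, Submodule.mem_inf]
  refine ⟨f0_hom, ?_⟩
  rw [Submodule.mem_iInf]
  intro M
  rw [Submodule.mem_iInf]
  intro hM
  rw [LinearMap.mem_eqLocus]
  show subst M f0 = f0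
  exact subst_f0_inv M hM

lemma mem_gen {f : MvPolynomial (Fin 4) ℂ} (hf : f ∈ OOprimeInv4)
    (M : Matrix (Fin 4) (Fin 4) ℝ)
    (hM : M ∈ ({A1l, A1r, A2l, A2r, R4A2, SS} : Set (Matrix (Fin 4) (Fin 4) ℝ))) :
    subst M f = f := by
  rw [OOprimeInv4, Submodule.mem_inf] at hf
  have h := (Submodule.mem_iInf _).mp ((Submodule.mem_iInf _).mp hf.2 M) hM
  rw [LinearMap.mem_eqLocus] at h
  exact h

lemma main_span (f : MvPolynomial (Fin 4) ℂ) (hf : f ∈ OOprimeInv4) :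
    f ∈ Submodule.span ℂ ({q ^ 2, f0} : Set (MvPolynomial (Fin 4) ℂ)) := by
  have hmemset : ∀ M ∈ ({A1l, A1r, A2l, A2r, R4A2, SS} : Set (Matrix (Fin 4) (Fin 4) ℝ)),
      subst M f = f := fun M hM => mem_gen hf M hM
  have hA1l : subst A1l f = f := hmemset A1l (by simp)
  have hA1r : subst A1r f = f := hmemset A1r (by simp)
  have hA2l : subst A2l f = f := hmemset A2l (by simp)
  have hA2r : subst A2r f = f := hmemset A2r (by simp)
  have hR : subst R4A2 f = f := hmemset R4A2 (by simp)
  have hSS : subst SS f = f := hmemset SS (by simp)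
  set c1 : ℂ := coeff (Fd 2 2 0 0) f / 2 with hc1
  set c2 : ℂ := coeff (Fd 4 0 0 0) f - coeff (Fd 2 2 0 0) f / 2 with hc2
  set g : MvPolynomial (Fin 4) ℂ := f - c1 • q ^ 2 - c2 • f0 with hgdef
  have hgM : ∀ M ∈ ({A1l, A1r, A2l, A2r, R4A2, SS} : Set (Matrix (Fin 4) (Fin 4) ℝ)),
      subst M g = g := by
    intro M hM
    rw [hgdef, map_sub, map_sub, _root_.map_smul, _root_.map_smul, hmemset M hM, map_pow,
      subst_q_inv M hM, subst_f0_inv M hM]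
  have hgA1l : subst A1l g = g := hgM A1l (by simp)
  have hgA1r : subst A1r g = g := hgM A1r (by simp)
  have hgA2l : subst A2l g = g := hgM A2l (by simp)
  have hgA2r : subst A2r g = g := hgM A2r (by simp)
  have hgR : subst R4A2 g = g := hgM R4A2 (by simp)
  have hgSS : subst SS g = g := hgM SS (by simp)
  have agA1l : aeval (fun i => C (cA1l i) * X (sA1l i)) g = g := by
    rw [← subst_A1l_eq]; exact hgA1l
  have agR : aeval (fun i => C (cR i) * X (sR i)) g = g := by
    rw [← subst_R_eq]; exact hgR
  have agSS : aeval (fun i => C (cSS i) * X (sSS i)) g = g := by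
    rw [← subst_SS_eq]; exact hgSS
  have agD1 : aeval (fun i => C (cD1 i) * X i) g = g := by
    rw [← subst_D1_eq, hgA1l, hgA1r]
  have agD2 : aeval (fun i => C (cD2 i) * X i) g = g := by
    rw [← subst_D2_eq, hgA2l, hgA2r]
  have hghom : g.IsHomogeneous 4 := by
    rw [← mem_homogeneousSubmodule]
    have h1 : f ∈ homogeneousSubmodule (Fin 4) ℂ 4 := by
      rw [OOprimeInv4, Submodule.mem_inf] at hf; exact hf.1
    exact sub_mem (sub_mem h1 (Submodule.smul_mem _ _ q2_hom)) (Submodule.smul_mem _ _ f0_hom)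
  have hz4 : coeff (Fd 4 0 0 0) g = 0 := by
    rw [hgdef, coeff_sub, coeff_sub, coeff_smul, coeff_smul, coeff_q2_4000, coeff_f0_4000,
      hc1, hc2]
    simp only [smul_eq_mul]
    ring
  have hz22 : coeff (Fd 2 2 0 0) g = 0 := by
    rw [hgdef, coeff_sub, coeff_sub, coeff_smul, coeff_smul, coeff_q2_2200, coeff_f0_2200,
      hc1, hc2]
    simp only [smul_eq_mul]
    ring
  have hg0 : g = 0 := by
    ext d
    rw [coeff_zero]
    by_contra hne
    have hdeg : d.degree = 4 := by
      rw [Finsupp.degree_eq_weight_one]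
      exact hghom hne
    have hsum : d 0 + d 1 + d 2 + d 3 = 4 := by
      rw [← Fin.sum_univ_four (fun i => d i)]
      rw [← Finset.sum_subset (Finset.subset_univ d.support)
        (fun i _ hi => Finsupp.notMem_support_iff.mp hi)]
      exact hdeg
    have hzero := kzero (fun a b c e => coeff (Fd a b c e) g)
      (relA1l agA1l) (relR agR) (relSS agSS) (relD1 agD1) (relD2 agD2)
      hz4 hz22 (d 0) (d 1) (d 2) (d 3) hsum
    have hzero' : coeff (Fd (d 0) (d 1) (d 2) (d 3)) g = 0 := hzero
    rw [Fd_eta] at hzero'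
    exact hne hzero'
  have hfrepr : f = c1 • q ^ 2 + c2 • f0 := by
    have h := hg0
    rw [hgdef, sub_sub, sub_eq_zero] at h
    exact h
  exact Submodule.mem_span_pair.mpr ⟨c1, c2, hfrepr.symm⟩

lemma span_eq : OOprimeInv4 = Submodule.span ℂ ({q ^ 2, f0} : Set (MvPolynomial (Fin 4) ℂ)) := by
  apply le_antisymm
  · intro f hf
    exact main_span f hf
  · rw [Submodule.span_le]
    rintro x hx
    rcases hx with rfl | rfl
    · exact q2_mem
    · exact f0_mem

lemma lin_indep : LinearIndependent ℂ ![q ^ 2, f0] := by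
  rw [LinearIndependent.pair_iff]
  intro s t hst
  have h22 : coeff (Fd 2 2 0 0) (s • q ^ 2 + t • f0) = 0 := by rw [hst, coeff_zero]
  have h4 : coeff (Fd 4 0 0 0) (s • q ^ 2 + t • f0) = 0 := by rw [hst, coeff_zero]
  rw [coeff_add, coeff_smul, coeff_smul, coeff_q2_2200, coeff_f0_2200] at h22
  rw [coeff_add, coeff_smul, coeff_smul, coeff_q2_4000, coeff_f0_4000] at h4
  simp only [smul_eq_mul] at h22 h4
  constructor
  · linear_combination h22 / 2
  · linear_combination h4 - h22 / 2

theorem stmt7 :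
    Module.finrank ℂ OOprimeInv4 = 2 ∧
    OOprimeInv4 = Submodule.span ℂ {q ^ 2, f0} := by
  have hspan := span_eq
  constructor
  · rw [hspan]
    have hrange : Set.range ![q ^ 2, f0] = ({q ^ 2, f0} : Set (MvPolynomial (Fin 4) ℂ)) := by
      ext z
      simp [Fin.exists_fin_two, eq_comm, or_comm]
    rw [← hrange]
    rw [finrank_span_eq_card lin_indep]
    simp
  · exact hspan
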